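/- Let (V, s, t, c) be a flow network and let f and f' be two maximum flows in this network. Then S_f = S_{f'}, T_f = T_{f'}, and U_f = U_{f'}; that is, the decomposition of the vertices into the three sets S, T, U is invariant of the choice of maximum flow. -/

import Mathlib

open scoped Classical

/-- A flow network: a finite vertex type with a source `s`, a sink `t` and a
capacity function `c` with no self-loops, no edges into `s` and no edges out of `t`. -/
structure FlowNet (V : Type) [Fintype V] where
  s : V
  t : V
  hst : s ≠ t
  c : V → V → ℕ
  c_self : ∀ v, c v v = 0
  c_to_s : ∀ v, c v s = 0
  c_from_t : ∀ v, c t v = 0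

namespace FlowNet

variable {V : Type} [Fintype V]

/-- `f` is a flow: capacity-respecting and conserving flow at all internal vertices. -/
def IsFlow (N : FlowNet V) (f : V → V → ℕ) : Prop :=
  (∀ u v, f u v ≤ N.c u v) ∧
  ∀ v, v ≠ N.s → v ≠ N.t → (∑ u, f u v) = ∑ u, f v u

/-- The value of a flow: total flow out of the source. -/
def value (N : FlowNet V) (f : V → V → ℕ) : ℕ := ∑ v, f N.s v

/-- `f` is a maximum flow. -/
def IsMaxFlow (N : FlowNet V) (f : V → V → ℕ) : Prop :=
  N.IsFlow f ∧ ∀ f', N.IsFlow f' → N.value f' ≤ N.value f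

/-- Edge of the residual graph of `f`. -/
def ResEdge (N : FlowNet V) (f : V → V → ℕ) (u v : V) : Prop :=
  f u v < N.c u v ∨ 0 < f v u

/-- `S_f`: vertices reachable from `s` in the residual graph of `f`. -/
def Sset (N : FlowNet V) (f : V → V → ℕ) : Set V :=
  {v | Relation.ReflTransGen (N.ResEdge f) N.s v}

/-- `T_f`: vertices from which `t` is reachable in the residual graph of `f`. -/
def Tset (N : FlowNet V) (f : V → V → ℕ) : Set V :=
  {v | Relation.ReflTransGen (N.ResEdge f) v N.t}

/-- `U_f`: all remaining vertices. -/
def Uset (N : FlowNet V) (f : V → V → ℕ) : Set V :=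
  (N.Sset f ∪ N.Tset f)ᶜ

/-- An s-t cut: a set of vertices containing `s` but not `t`. -/
def IsCut (N : FlowNet V) (X : Set V) : Prop :=
  N.s ∈ X ∧ N.t ∉ X

/-- The capacity of a cut. -/
noncomputable def cap (N : FlowNet V) (X : Set V) : ℕ :=
  ∑ u, ∑ v, if u ∈ X ∧ v ∉ X then N.c u v else 0

/-- A minimum s-t cut. -/
def IsMinCut (N : FlowNet V) (X : Set V) : Prop :=
  N.IsCut X ∧ ∀ Y, N.IsCut Y → N.cap X ≤ N.cap Y

end FlowNet


namespace FlowNetProofAux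

variable {V : Type} [Fintype V]

lemma sum_indicator_unique {P : V → Prop} {dp : ∀ u, Decidable (P u)}
    {de : Decidable (∃ u, P u)}
    (h : ∀ u w, P u → P w → u = w) :
    (∑ u, if P u then (1:ℤ) else 0) = if ∃ u, P u then 1 else 0 := by
  by_cases hex : ∃ u, P u
  · obtain ⟨u0, hu0⟩ := hex
    rw [if_pos ⟨u0, hu0⟩]
    have he : ∀ u, (if P u then (1:ℤ) else 0) = if u = u0 then 1 else 0 := by
      intro u; by_cases hp : P u
      · rw [if_pos hp, if_pos (h u u0 hp hu0)]
      · rw [if_neg hp, if_neg]; rintro rfl; exact hp hu0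
    simp_rw [he]
    simp
  · rw [if_neg hex]
    have h0 : ∀ u, ¬ P u := fun u hu => hex ⟨u, hu⟩
    simp [h0]

lemma ind_split {P : V → Prop} (C : V → Prop)
    {d1 : Decidable (∃ u, P u ∧ C u)} {d2 : Decidable (∃ u, P u ∧ ¬ C u)}
    {d3 : Decidable (∃ u, P u)}
    (huniq : ∀ u w, P u → P w → u = w) :
    ((if ∃ u, P u ∧ C u then (1:ℤ) else 0) + (if ∃ u, P u ∧ ¬ C u then 1 else 0))
      = if ∃ u, P u then 1 else 0 := by
  by_cases hex : ∃ u, P u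
  · obtain ⟨u0, hu0⟩ := hex
    have h1 : (∃ u, P u ∧ C u) ↔ C u0 :=
      ⟨fun ⟨u, hu, hc⟩ => (huniq u u0 hu hu0) ▸ hc, fun hc => ⟨u0, hu0, hc⟩⟩
    have h2 : (∃ u, P u ∧ ¬ C u) ↔ ¬ C u0 :=
      ⟨fun ⟨u, hu, hc⟩ => (huniq u u0 hu hu0) ▸ hc, fun hc => ⟨u0, hu0, hc⟩⟩
    by_cases hc : C u0
    · rw [if_pos (h1.mpr hc), if_neg (fun h => (h2.mp h) hc), if_pos ⟨u0, hu0⟩]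
      ring
    · rw [if_neg (fun h => hc (h1.mp h)), if_pos (h2.mpr hc), if_pos ⟨u0, hu0⟩]
      ring
  · rw [if_neg hex, if_neg (fun ⟨u, hu, _⟩ => hex ⟨u, hu⟩),
      if_neg (fun h => hex ⟨h.choose, h.choose_spec.1⟩)]
    simp

lemma chain_dedup {α : Type*} (r : α → α → Prop) :
    ∀ (l : List α) (a : α), List.Chain r a l →
      ∃ m, List.Chain r a m ∧
        (a :: m).getLast? = (a :: l).getLast? ∧
        (a :: m).Nodup ∧ m ⊆ l := by
  intro l
  induction l with
  | nil => intro a _; exact ⟨[], List.Chain.nil, rfl, by simp, by simp⟩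
  | cons b rest ih =>
    intro a hch
    rw [List.Chain, List.chain_cons] at hch
    obtain ⟨hab, hrest⟩ := hch
    obtain ⟨m, hm_ch, hm_last, hm_nd, hm_sub⟩ := ih b hrest
    by_cases ha : a ∈ b :: m
    · obtain ⟨p, q, hpq⟩ := List.append_of_mem ha
      have hnd' : (p ++ a :: q).Nodup := hpq ▸ hm_nd
      have hqnd : (a :: q).Nodup := (List.sublist_append_right p (a :: q)).nodup hnd'
      have hqch : List.Chain r a q := by
        rcases p with _ | ⟨c, p'⟩
        · simp at hpq
          rcases hpq with ⟨rfl, rfl⟩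
          exact hm_ch
        · have hm : m = p' ++ a :: q := by simpa using congrArg List.tail hpq
          rw [hm] at hm_ch
          exact ((List.isChain_split (l₁ := b :: p')).mp hm_ch).2
      have hqsub : q ⊆ b :: rest := by
        intro x hx
        have hxm : x ∈ b :: m := by
          rw [hpq]; exact List.mem_append_right p (List.mem_cons_of_mem a hx)
        rcases List.mem_cons.mp hxm with h | h
        · simp [h]
        · exact List.mem_cons_of_mem b (hm_sub h)
      have hqlast : (a :: q).getLast? = (a :: b :: rest).getLast? := by
        rw [List.getLast?_cons_cons, ← hm_last, hpq, List.getLast?_append]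
        simp [List.getLast?_eq_getLast (List.cons_ne_nil a q)]
      exact ⟨q, hqch, hqlast, hqnd, hqsub⟩
    · refine ⟨b :: m, List.chain_cons.mpr ⟨hab, hm_ch⟩, ?_, ?_, ?_⟩
      · rw [List.getLast?_cons_cons, List.getLast?_cons_cons]
        exact hm_last
      · exact List.nodup_cons.mpr ⟨ha, hm_nd⟩
      · intro x hx
        rcases List.mem_cons.mp hx with h | h
        · simp [h]
        · exact List.mem_cons_of_mem b (hm_sub h)

lemma exists_better_flow (N : FlowNet V) (f : V → V → ℕ) (hf : N.IsFlow f)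
    (hpath : Relation.ReflTransGen (N.ResEdge f) N.s N.t) :
    ∃ g, N.IsFlow g ∧ N.value g = N.value f + 1 := by
  classical
  obtain ⟨l0, hch0, hlast0⟩ := List.exists_isChain_cons_of_relationReflTransGen hpath
  obtain ⟨m, hch, hlast?, hnd, -⟩ := chain_dedup _ l0 N.s hch0
  have hlastm : (N.s :: m).getLast? = some N.t := by
    rw [hlast?, List.getLast?_eq_getLast (List.cons_ne_nil _ _), hlast0]
  set L : List V := N.s :: m with hL
  have hLne : L ≠ [] := by simp [hL]
  have hlen1 : 0 < L.length := by simp [hL]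
  have hmne : m ≠ [] := by
    intro h
    rw [hL, h] at hlastm
    simp at hlastm
    exact N.hst hlastm
  have hlen2 : 2 ≤ L.length := by
    rw [hL]
    have : 0 < m.length := List.length_pos_iff.mpr hmne
    simp only [List.length_cons]
    omega
  have hnd' : L.Nodup := hnd
  have hhead : L.get ⟨0, hlen1⟩ = N.s := rfl
  have hlastget : L.get ⟨L.length - 1, by omega⟩ = N.t := by
    have h1 := List.getLast?_eq_getLast hLne
    have h2 : L.getLast hLne = N.t := Option.some.inj (h1.symm.trans hlastm)
    rw [← h2, List.getLast_eq_getElem, List.get_eq_getElem]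
  have hch' : List.Chain' (N.ResEdge f) L := hch
  have getinj : ∀ {i j : ℕ} (hi : i < L.length) (hj : j < L.length),
      L.get ⟨i, hi⟩ = L.get ⟨j, hj⟩ → i = j := by
    intro i j hi hj h
    have := (hnd'.get_inj_iff).mp h
    simpa using this
  set st : V → V → Prop := fun u v => ∃ (i : ℕ) (h : i + 1 < L.length),
      L.get ⟨i, Nat.lt_of_succ_lt h⟩ = u ∧ L.get ⟨i+1, h⟩ = v with hst_def
  have st_res : ∀ u v, st u v → N.ResEdge f u v := by
    rintro u v ⟨i, h, rfl, rfl⟩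
    have := List.IsChain.getElem hch' i h; simpa using this
  have st_out : ∀ u v w, st u v → st u w → v = w := by
    rintro u v w ⟨i, hi, hiu, rfl⟩ ⟨j, hj, hju, rfl⟩
    have hij : i = j := getinj _ _ (hiu.trans hju.symm)
    subst hij; rfl
  have st_in : ∀ u v w, st u w → st v w → u = v := by
    rintro u v w ⟨i, hi, rfl, hiw⟩ ⟨j, hj, rfl, hjw⟩
    have hij : i + 1 = j + 1 := getinj _ _ (hiw.trans hjw.symm)
    have : i = j := by omega
    subst this; rfl
  have st_not_both : ∀ u v, st u v → st v u → False := by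
    rintro u v ⟨i, hi, hiu, hiv⟩ ⟨j, hj, hjv, hju⟩
    have h1 : i = j + 1 := getinj _ _ (hiu.trans hju.symm)
    have h2 : i + 1 = j := getinj _ _ (hiv.trans hjv.symm)
    omega
  have not_into_s : ∀ u, ¬ st u N.s := by
    rintro u ⟨i, hi, hiu, his⟩
    have : i + 1 = 0 := getinj _ _ (his.trans hhead.symm)
    omega
  have not_from_t : ∀ u, ¬ st N.t u := by
    rintro u ⟨i, hi, hit, hiu⟩
    have : i = L.length - 1 := getinj _ _ (hit.trans hlastget.symm)
    omega
  have mem_st_l : ∀ u v, st u v → u ∈ L := by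
    rintro u v ⟨i, hi, rfl, -⟩; exact L.get_mem _
  have mem_st_r : ∀ u v, st u v → v ∈ L := by
    rintro u v ⟨i, hi, -, rfl⟩; exact L.get_mem _
  have exists_from_s : ∃ v, st N.s v :=
    ⟨L.get ⟨1, by omega⟩, 0, by omega, hhead, rfl⟩
  have succ_exists : ∀ v, v ∈ L → v ≠ N.t → ∃ w, st v w := by
    intro v hv hvt
    obtain ⟨⟨i, hi⟩, rfl⟩ := List.mem_iff_get.mp hv
    have : i ≠ L.length - 1 := by
      intro h
      apply hvt
      rw [← hlastget]
      exact congrArg L.get (Fin.mk_eq_mk.mpr h)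
    have hi1 : i + 1 < L.length := by omega
    exact ⟨L.get ⟨i+1, hi1⟩, i, hi1, rfl, rfl⟩
  have pred_exists : ∀ v, v ∈ L → v ≠ N.s → ∃ u, st u v := by
    intro v hv hvs
    obtain ⟨⟨i, hi⟩, rfl⟩ := List.mem_iff_get.mp hv
    have hi0 : i ≠ 0 := by
      intro h
      apply hvs
      rw [← hhead]
      exact congrArg L.get (Fin.mk_eq_mk.mpr h)
    refine ⟨L.get ⟨i - 1, by omega⟩, i - 1, by omega, rfl, ?_⟩
    exact congrArg L.get (Fin.mk_eq_mk.mpr (by omega))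
  -- the augmented flow
  set g : V → V → ℕ := fun a b =>
    if st a b ∧ f a b < N.c a b then f a b + 1
    else if st b a ∧ ¬ (f b a < N.c b a) then f a b - 1
    else f a b with hg
  have hBpos : ∀ a b, st b a → ¬ (f b a < N.c b a) → 0 < f a b := by
    intro a b hst hnc
    rcases st_res b a hst with h | h
    · exact absurd h hnc
    · exact h
  have hgZ : ∀ a b, (g a b : ℤ) = (f a b : ℤ)
      + (if st a b ∧ f a b < N.c a b then 1 else 0)
      - (if st b a ∧ ¬ (f b a < N.c b a) then 1 else 0) := by
    intro a b
    by_cases h1 : st a b ∧ f a b < N.c a b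
    · have h2 : ¬ (st b a ∧ ¬ (f b a < N.c b a)) := fun hb => st_not_both a b h1.1 hb.1
      rw [hg]; simp only [if_pos h1, if_neg h2]; push_cast; ring
    · by_cases h2 : st b a ∧ ¬ (f b a < N.c b a)
      · have hpos : 0 < f a b := hBpos a b h2.1 h2.2
        rw [hg]; simp only [if_neg h1, if_pos h2]
        have hc : (↑(f a b - 1) : ℤ) = (f a b : ℤ) - 1 := by
          have : 1 ≤ f a b := hpos
          push_cast [this]
          ring
        rw [hc]; ring
      · rw [hg]; simp only [if_neg h1, if_neg h2]; ring
  have hgc : ∀ a b, g a b ≤ N.c a b := by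
    intro a b
    rw [hg]
    by_cases h1 : st a b ∧ f a b < N.c a b
    · simp only [if_pos h1]; exact h1.2
    · by_cases h2 : st b a ∧ ¬ (f b a < N.c b a)
      · simp only [if_neg h1, if_pos h2]
        exact le_trans (Nat.sub_le _ _) (hf.1 a b)
      · simp only [if_neg h1, if_neg h2]
        exact hf.1 a b
  have hsum_in : ∀ v : V, (∑ u, (g u v : ℤ)) = (∑ u, (f u v : ℤ))
      + (if ∃ u, st u v ∧ f u v < N.c u v then 1 else 0)
      - (if ∃ u, st v u ∧ ¬ (f v u < N.c v u) then 1 else 0) := by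
    intro v
    calc (∑ u, (g u v : ℤ))
        = ∑ u, ((f u v : ℤ) + (if st u v ∧ f u v < N.c u v then 1 else 0)
            - (if st v u ∧ ¬ (f v u < N.c v u) then 1 else 0)) :=
          Finset.sum_congr rfl (fun u _ => hgZ u v)
      _ = (∑ u, (f u v : ℤ)) + (∑ u, if st u v ∧ f u v < N.c u v then (1:ℤ) else 0)
            - (∑ u, if st v u ∧ ¬ (f v u < N.c v u) then (1:ℤ) else 0) := by
          rw [Finset.sum_sub_distrib, Finset.sum_add_distrib]
      _ = _ := by
          have hI1 : (∑ u, if st u v ∧ f u v < N.c u v then (1:ℤ) else 0)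
              = if ∃ u, st u v ∧ f u v < N.c u v then 1 else 0 :=
            sum_indicator_unique (P := fun u => st u v ∧ f u v < N.c u v)
              (fun u w hu hw => st_in u w v hu.1 hw.1)
          have hI2 : (∑ u, if st v u ∧ ¬ (f v u < N.c v u) then (1:ℤ) else 0)
              = if ∃ u, st v u ∧ ¬ (f v u < N.c v u) then 1 else 0 :=
            sum_indicator_unique (P := fun u => st v u ∧ ¬ (f v u < N.c v u))
              (fun u w hu hw => st_out v u w hu.1 hw.1)
          rw [hI1, hI2]
  have hsum_out : ∀ v : V, (∑ u, (g v u : ℤ)) = (∑ u, (f v u : ℤ))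
      + (if ∃ u, st v u ∧ f v u < N.c v u then 1 else 0)
      - (if ∃ u, st u v ∧ ¬ (f u v < N.c u v) then 1 else 0) := by
    intro v
    calc (∑ u, (g v u : ℤ))
        = ∑ u, ((f v u : ℤ) + (if st v u ∧ f v u < N.c v u then 1 else 0)
            - (if st u v ∧ ¬ (f u v < N.c u v) then 1 else 0)) :=
          Finset.sum_congr rfl (fun u _ => hgZ v u)
      _ = (∑ u, (f v u : ℤ)) + (∑ u, if st v u ∧ f v u < N.c v u then (1:ℤ) else 0)
            - (∑ u, if st u v ∧ ¬ (f u v < N.c u v) then (1:ℤ) else 0) := by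
          rw [Finset.sum_sub_distrib, Finset.sum_add_distrib]
      _ = _ := by
          have hI1 : (∑ u, if st v u ∧ f v u < N.c v u then (1:ℤ) else 0)
              = if ∃ u, st v u ∧ f v u < N.c v u then 1 else 0 :=
            sum_indicator_unique (P := fun u => st v u ∧ f v u < N.c v u)
              (fun u w hu hw => st_out v u w hu.1 hw.1)
          have hI2 : (∑ u, if st u v ∧ ¬ (f u v < N.c u v) then (1:ℤ) else 0)
              = if ∃ u, st u v ∧ ¬ (f u v < N.c u v) then 1 else 0 :=
            sum_indicator_unique (P := fun u => st u v ∧ ¬ (f u v < N.c u v))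
              (fun u w hu hw => st_in u w v hu.1 hw.1)
          rw [hI1, hI2]
  have hcons : ∀ v, v ≠ N.s → v ≠ N.t → (∑ u, g u v) = ∑ u, g v u := by
    intro v hvs hvt
    have hfc : (∑ u, f u v) = ∑ u, f v u := hf.2 v hvs hvt
    have key : (if ∃ u, st u v then (1:ℤ) else 0) = (if ∃ u, st v u then 1 else 0) := by
      by_cases h : ∃ u, st u v
      · obtain ⟨u, hu⟩ := h
        obtain ⟨w, hw⟩ := succ_exists v (mem_st_r u v hu) hvt
        rw [if_pos ⟨u, hu⟩, if_pos ⟨w, hw⟩]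
      · rw [if_neg h, if_neg]
        rintro ⟨w, hw⟩
        exact h (pred_exists v (mem_st_l v w hw) hvs)
    have e1 : ((if ∃ u, st u v ∧ f u v < N.c u v then (1:ℤ) else 0)
        + (if ∃ u, st u v ∧ ¬ (f u v < N.c u v) then 1 else 0))
        = if ∃ u, st u v then 1 else 0 :=
      ind_split (P := fun u => st u v) (fun u => f u v < N.c u v)
        (fun u w hu hw => st_in u w v hu hw)
    have e2 : ((if ∃ u, st v u ∧ f v u < N.c v u then (1:ℤ) else 0)
        + (if ∃ u, st v u ∧ ¬ (f v u < N.c v u) then 1 else 0))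
        = if ∃ u, st v u then 1 else 0 :=
      ind_split (P := fun u => st v u) (fun u => f v u < N.c v u)
        (fun u w hu hw => st_out v u w hu hw)
    have hZ : (∑ u, (g u v : ℤ)) = ∑ u, (g v u : ℤ) := by
      rw [hsum_in v, hsum_out v]
      have hfcZ : (∑ u, (f u v : ℤ)) = ∑ u, (f v u : ℤ) := by exact_mod_cast hfc
      rw [hfcZ]
      linarith [e1, e2, key]
    exact_mod_cast hZ
  have hval : N.value g = N.value f + 1 := by
    have hA0 : ∃ u, st N.s u ∧ f N.s u < N.c N.s u := by
      obtain ⟨w, hw⟩ := exists_from_s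
      refine ⟨w, hw, ?_⟩
      by_contra hnc
      have hpos : 0 < f w N.s := hBpos w N.s hw hnc
      have : f w N.s ≤ 0 := le_trans (hf.1 w N.s) (le_of_eq (N.c_to_s w))
      omega
    have hB0 : ¬ ∃ u, st u N.s ∧ ¬ (f u N.s < N.c u N.s) :=
      fun ⟨u, hu, _⟩ => not_into_s u hu
    have hZ : (∑ u, (g N.s u : ℤ)) = (∑ u, (f N.s u : ℤ)) + 1 := by
      rw [hsum_out N.s, if_pos hA0, if_neg hB0]
      ring
    have : (N.value g : ℤ) = (N.value f : ℤ) + 1 := by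
      unfold FlowNet.value
      push_cast
      exact hZ
    exact_mod_cast this
  exact ⟨g, ⟨hgc, hcons⟩, hval⟩


lemma in_s_zero (N : FlowNet V) (f : V → V → ℕ) (hf : N.IsFlow f) :
    (∑ u, f u N.s) = 0 :=
  Finset.sum_eq_zero fun u _ => Nat.le_zero.mp ((hf.1 u N.s).trans (N.c_to_s u).le)

lemma cut_identity (N : FlowNet V) (f : V → V → ℕ) (hf : N.IsFlow f) (X : Set V)
    (hs : N.s ∈ X) (ht : N.t ∉ X) :
    (∑ u, ∑ v, if u ∈ X ∧ v ∉ X then f u v else 0)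
      = N.value f + ∑ u, ∑ v, if u ∈ X ∧ v ∉ X then f v u else 0 := by
  classical
  have hpt : ∀ v, (if v ∈ X then (∑ u, f v u) else 0)
      = (if v = N.s then N.value f else 0) + (if v ∈ X then (∑ u, f u v) else 0) := by
    intro v
    by_cases hv : v ∈ X
    · by_cases hvs : v = N.s
      · subst hvs
        rw [if_pos hv, if_pos rfl, if_pos hv, in_s_zero N f hf]
        rfl
      · have hvt : v ≠ N.t := fun h => ht (h ▸ hv)
        rw [if_pos hv, if_pos hv, if_neg hvs, hf.2 v hvs hvt, zero_add]
    · have hvs : v ≠ N.s := fun h => hv (h ▸ hs)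
      rw [if_neg hv, if_neg hv, if_neg hvs]
  have hS : (∑ v, if v ∈ X then (∑ u, f v u) else 0)
      = N.value f + ∑ v, if v ∈ X then (∑ u, f u v) else 0 := by
    calc (∑ v, if v ∈ X then (∑ u, f v u) else 0)
        = ∑ v, ((if v = N.s then N.value f else 0) + (if v ∈ X then (∑ u, f u v) else 0)) :=
          Finset.sum_congr rfl fun v _ => hpt v
      _ = (∑ v, if v = N.s then N.value f else 0)
            + ∑ v, (if v ∈ X then (∑ u, f u v) else 0) := Finset.sum_add_distrib
      _ = N.value f + ∑ v, (if v ∈ X then (∑ u, f u v) else 0) := by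
          rw [Finset.sum_ite_eq' Finset.univ N.s (fun _ => N.value f),
            if_pos (Finset.mem_univ N.s)]
  have hsplit : ∀ (h : V → ℕ) (v : V), (if v ∈ X then (∑ u, h u) else 0)
      = (∑ u, if v ∈ X ∧ u ∈ X then h u else 0)
        + ∑ u, (if v ∈ X ∧ u ∉ X then h u else 0) := by
    intro h v
    by_cases hv : v ∈ X
    · rw [if_pos hv, ← Finset.sum_add_distrib]
      refine Finset.sum_congr rfl fun u _ => ?_
      by_cases hu : u ∈ X
      · simp [hv, hu]
      · simp [hv, hu]
    · simp [hv]
  have hD : (∑ v, ∑ u, if v ∈ X ∧ u ∈ X then f v u else 0)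
      = ∑ v, ∑ u, if v ∈ X ∧ u ∈ X then f u v else 0 := by
    rw [Finset.sum_comm]
    exact Finset.sum_congr rfl fun a _ => Finset.sum_congr rfl fun b _ =>
      if_congr and_comm rfl rfl
  have h1 : (∑ v, if v ∈ X then (∑ u, f v u) else 0)
      = (∑ v, ∑ u, if v ∈ X ∧ u ∈ X then f v u else 0)
        + ∑ v, ∑ u, (if v ∈ X ∧ u ∉ X then f v u else 0) := by
    rw [← Finset.sum_add_distrib]
    exact Finset.sum_congr rfl fun v _ => hsplit (fun u => f v u) v
  have h2 : (∑ v, if v ∈ X then (∑ u, f u v) else 0)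
      = (∑ v, ∑ u, if v ∈ X ∧ u ∈ X then f u v else 0)
        + ∑ v, ∑ u, (if v ∈ X ∧ u ∉ X then f u v else 0) := by
    rw [← Finset.sum_add_distrib]
    exact Finset.sum_congr rfl fun v _ => hsplit (fun u => f u v) v
  rw [h1, h2, hD] at hS
  omega

lemma saturated (N : FlowNet V) (f : V → V → ℕ) (hf : N.IsFlow f) (X : Set V)
    (hs : N.s ∈ X) (ht : N.t ∉ X) (hvc : N.value f = N.cap X) :
    ∀ u, u ∈ X → ∀ v, v ∉ X → ¬ N.ResEdge f u v := by
  classical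
  have hid := cut_identity N f hf X hs ht
  have pt : ∀ i ∈ Finset.univ, (∑ w, if i ∈ X ∧ w ∉ X then f i w else 0)
      ≤ ∑ w, if i ∈ X ∧ w ∉ X then N.c i w else 0 := fun i _ =>
    Finset.sum_le_sum fun w _ => by
      by_cases h : i ∈ X ∧ w ∉ X
      · simpa [h] using hf.1 i w
      · simp [h]
  have hFle : (∑ u, ∑ v, if u ∈ X ∧ v ∉ X then f u v else 0) ≤ N.cap X :=
    Finset.sum_le_sum pt
  have hR : (∑ u, ∑ v, if u ∈ X ∧ v ∉ X then f v u else 0) = 0 := by omega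
  have hF : (∑ u, ∑ v, if u ∈ X ∧ v ∉ X then f u v else 0) = N.cap X := by omega
  intro u hu v hv
  have hsat : f u v = N.c u v := by
    have h1 := (Finset.sum_eq_sum_iff_of_le pt).mp hF u (Finset.mem_univ u)
    have pt2 : ∀ w ∈ Finset.univ, (if u ∈ X ∧ w ∉ X then f u w else 0)
        ≤ if u ∈ X ∧ w ∉ X then N.c u w else 0 := fun w _ => by
      by_cases h : u ∈ X ∧ w ∉ X
      · simpa [h] using hf.1 u w
      · simp [h]
    have h2 := (Finset.sum_eq_sum_iff_of_le pt2).mp h1 v (Finset.mem_univ v)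
    simpa [hu, hv] using h2
  have hzero : f v u = 0 := by
    have h1 := (Finset.sum_eq_zero_iff).mp hR u (Finset.mem_univ u)
    have h2 := (Finset.sum_eq_zero_iff).mp h1 v (Finset.mem_univ v)
    simpa [hu, hv] using h2
  rintro (h | h)
  · omega
  · omega

lemma value_eq_cap_of_no_res (N : FlowNet V) (f : V → V → ℕ) (hf : N.IsFlow f)
    (X : Set V) (hs : N.s ∈ X) (ht : N.t ∉ X)
    (hno : ∀ u, u ∈ X → ∀ v, v ∉ X → ¬ N.ResEdge f u v) :
    N.value f = N.cap X := by
  classical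
  have hid := cut_identity N f hf X hs ht
  have hR : (∑ u, ∑ v, if u ∈ X ∧ v ∉ X then f v u else 0) = 0 :=
    Finset.sum_eq_zero fun u _ => Finset.sum_eq_zero fun v _ => by
      by_cases h : u ∈ X ∧ v ∉ X
      · rw [if_pos h]
        by_contra hne
        exact hno u h.1 v h.2 (Or.inr (Nat.pos_of_ne_zero hne))
      · rw [if_neg h]
  have hF : (∑ u, ∑ v, if u ∈ X ∧ v ∉ X then f u v else 0) = N.cap X := by
    refine Finset.sum_congr rfl fun u _ => Finset.sum_congr rfl fun v _ => ?_
    by_cases h : u ∈ X ∧ v ∉ X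
    · rw [if_pos h, if_pos h]
      by_contra hne
      exact hno u h.1 v h.2 (Or.inl (lt_of_le_of_ne (hf.1 u v) hne))
    · rw [if_neg h, if_neg h]
  omega

lemma no_aug (N : FlowNet V) (f : V → V → ℕ) (hf : N.IsMaxFlow f) :
    ¬ Relation.ReflTransGen (N.ResEdge f) N.s N.t := by
  intro hp
  obtain ⟨g, hg, hval⟩ := exists_better_flow N f hf.1 hp
  have := hf.2 g hg
  omega

lemma Sset_subset (N : FlowNet V) (f f' : V → V → ℕ)
    (hf : N.IsMaxFlow f) (hf' : N.IsMaxFlow f') : N.Sset f' ⊆ N.Sset f := by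
  have hts : N.t ∉ N.Sset f := no_aug N f hf
  have hno : ∀ u, u ∈ N.Sset f → ∀ v, v ∉ N.Sset f → ¬ N.ResEdge f u v :=
    fun u hu v hv h => hv (Relation.ReflTransGen.tail hu h)
  have hvc : N.value f = N.cap (N.Sset f) :=
    value_eq_cap_of_no_res N f hf.1 _ Relation.ReflTransGen.refl hts hno
  have hval : N.value f' = N.value f := le_antisymm (hf.2 f' hf'.1) (hf'.2 f hf.1)
  have hsat := saturated N f' hf'.1 (N.Sset f) Relation.ReflTransGen.refl hts
    (hval.trans hvc)
  intro v hv
  induction hv with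
  | refl => exact Relation.ReflTransGen.refl
  | tail hab hr ih =>
    by_contra hc
    exact hsat _ ih _ hc hr

lemma Tset_subset (N : FlowNet V) (f f' : V → V → ℕ)
    (hf : N.IsMaxFlow f) (hf' : N.IsMaxFlow f') : N.Tset f' ⊆ N.Tset f := by
  have hst : N.s ∈ (N.Tset f)ᶜ := no_aug N f hf
  have htt : N.t ∉ (N.Tset f)ᶜ := fun h => h Relation.ReflTransGen.refl
  have hno : ∀ u, u ∈ (N.Tset f)ᶜ → ∀ v, v ∉ (N.Tset f)ᶜ → ¬ N.ResEdge f u v := by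
    intro u hu v hv h
    exact hu (Relation.ReflTransGen.head h (not_not.mp hv))
  have hvc := value_eq_cap_of_no_res N f hf.1 _ hst htt hno
  have hval : N.value f' = N.value f := le_antisymm (hf.2 f' hf'.1) (hf'.2 f hf.1)
  have hsat := saturated N f' hf'.1 ((N.Tset f)ᶜ) hst htt (hval.trans hvc)
  intro v hv
  induction hv using Relation.ReflTransGen.head_induction_on with
  | refl => exact Relation.ReflTransGen.refl
  | head h _ ih =>
    by_contra hc
    exact hsat _ hc _ (not_not.mpr ih) h

end FlowNetProofAux

/-- the decomposition `S, T, U` is invariant of the choice of maximum flow. -/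
theorem stmt3 {V : Type} [Fintype V] (N : FlowNet V) (f f' : V → V → ℕ)
    (hf : N.IsMaxFlow f) (hf' : N.IsMaxFlow f') :
    N.Sset f = N.Sset f' ∧ N.Tset f = N.Tset f' ∧ N.Uset f = N.Uset f' := by
  have hS : N.Sset f = N.Sset f' :=
    Set.Subset.antisymm (FlowNetProofAux.Sset_subset N f' f hf' hf)
      (FlowNetProofAux.Sset_subset N f f' hf hf')
  have hT : N.Tset f = N.Tset f' :=
    Set.Subset.antisymm (FlowNetProofAux.Tset_subset N f' f hf' hf)
      (FlowNetProofAux.Tset_subset N f f' hf hf')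
  exact ⟨hS, hT, by unfold FlowNet.Uset; rw [hS, hT]⟩
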